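/- Let K be a non-archimedean local field and V a K-vector space of finite dimension N ≥ 1 equipped with two norms ‖·‖ and ‖·‖′. Suppose V = Kv ⊕ W is a direct-sum decomposition which is orthogonal for both norms, and suppose λ_1(‖·‖, ‖·‖′) = log(‖v‖′/‖v‖). Then for every integer i with 1 ≤ i ≤ N − 1, one has λ_i(‖·‖|_W, ‖·‖′|_W) = λ_{i+1}(‖·‖, ‖·‖′), where ‖·‖|_W and ‖·‖′|_W denote the restricted norms on W. -/

import Mathlib

/-- A (non-archimedean) norm on a vector space `V` over a normed field `K`:
a function `f : V → ℝ≥0` with `f v = 0` iff `v = 0`, `f (a • v) = |a| * f v`,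
and the ultrametric inequality `f (v + w) ≤ max (f v) (f w)`. -/
structure IsVecNorm (K : Type*) [NormedField K] (V : Type*) [AddCommGroup V] [Module K V]
    (f : V → ℝ) : Prop where
  nonneg : ∀ v, 0 ≤ f v
  eq_zero_iff : ∀ v, f v = 0 ↔ v = 0
  smul_eq : ∀ (a : K) (v : V), f (a • v) = ‖a‖ * f v
  add_le_max : ∀ v w, f (v + w) ≤ max (f v) (f w)

/-- A direct-sum decomposition `V = W₁ ⊕ W₂` is orthogonal for the norm `f` if it is a
decomposition (`W₁` and `W₂` are complementary submodules) and
`f (x + y) = max (f x) (f y)` for all `x ∈ W₁`, `y ∈ W₂`. -/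
def IsOrthogonalDecomp (K : Type*) [NormedField K] {V : Type*} [AddCommGroup V] [Module K V]
    (f : V → ℝ) (W₁ W₂ : Submodule K V) : Prop :=
  IsCompl W₁ W₂ ∧ ∀ x ∈ W₁, ∀ y ∈ W₂, f (x + y) = max (f x) (f y)

/-- The `i`-th term `λ_i(f, f')` of the relative spectrum of the norm `f'` with respect to
the norm `f`: the sup over subspaces `W ⊆ V` with `dim W ≥ i` of
`inf_{w ∈ W∖{0}} log (f' w / f w)`. -/
noncomputable def relativeSpectrum (K : Type*) [NormedField K] (V : Type*) [AddCommGroup V]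
    [Module K V] (f f' : V → ℝ) (i : ℕ) : ℝ :=
  ⨆ W : {W : Submodule K V // i ≤ Module.finrank K W},
    ⨅ w : {w : V // w ∈ W.1 ∧ w ≠ 0}, Real.log (f' w.1 / f w.1)

namespace IsVecNorm

variable {K : Type*} [NontriviallyNormedField K] {V : Type*} [AddCommGroup V] [Module K V]
  {f f' : V → ℝ}

lemma zero (hf : IsVecNorm K V f) : f 0 = 0 := (hf.eq_zero_iff 0).2 rfl

lemma pos (hf : IsVecNorm K V f) {x : V} (hx : x ≠ 0) : 0 < f x :=
  (hf.nonneg x).lt_of_ne fun h => hx ((hf.eq_zero_iff x).1 h.symm)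

lemma map_neg (hf : IsVecNorm K V f) (x : V) : f (-x) = f x := by
  rw [← neg_one_smul K x, hf.smul_eq]; simp

lemma abs_sub_le (hf : IsVecNorm K V f) (x y : V) : |f x - f y| ≤ f (x - y) := by
  rw [abs_sub_le_iff]
  constructor
  · have := hf.add_le_max y (x - y)
    simp only [add_sub_cancel] at this
    have h2 : max (f y) (f (x - y)) ≤ f y + f (x - y) :=
      max_le (le_add_of_nonneg_right (hf.nonneg _)) (le_add_of_nonneg_left (hf.nonneg _))
    linarith
  · have := hf.add_le_max x (y - x)
    simp only [add_sub_cancel] at this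
    have hne : f (y - x) = f (x - y) := by rw [← hf.map_neg (y - x), neg_sub]
    have h2 : max (f x) (f (y - x)) ≤ f x + f (y - x) :=
      max_le (le_add_of_nonneg_right (hf.nonneg _)) (le_add_of_nonneg_left (hf.nonneg _))
    linarith

lemma sum_le (hf : IsVecNorm K V f) {ι : Type*} (s : Finset ι) (g : ι → V) {M : ℝ}
    (hM : 0 ≤ M) (h : ∀ i ∈ s, f (g i) ≤ M) : f (∑ i ∈ s, g i) ≤ M := by
  classical
  induction s using Finset.induction with
  | empty => simpa [hf.zero] using hM
  | insert a s hnmem ih =>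
    rw [Finset.sum_insert hnmem]
    refine (hf.add_le_max _ _).trans (max_le (h a (Finset.mem_insert_self a s)) ?_)
    exact ih fun i hi => h i (Finset.mem_insert_of_mem hi)

lemma exists_upper [FiniteDimensional K V] (hf : IsVecNorm K V f) :
    ∃ C : ℝ, 0 < C ∧ ∀ x, f x ≤ C * ‖(Module.finBasis K V).equivFun x‖ := by
  set b := Module.finBasis K V
  have hC : (0:ℝ) < 1 + ∑ i, f (b i) := by
    have : (0:ℝ) ≤ ∑ i, f (b i) := Finset.sum_nonneg fun i _ => hf.nonneg _
    linarith
  refine ⟨1 + ∑ i, f (b i), hC, fun x => ?_⟩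
  conv_lhs => rw [← b.sum_equivFun x]
  refine hf.sum_le _ _ (mul_nonneg hC.le (norm_nonneg _)) fun i _ => ?_
  rw [hf.smul_eq]
  have h1 : ‖b.equivFun x i‖ ≤ ‖b.equivFun x‖ := norm_le_pi_norm _ i
  have h2 : f (b i) ≤ 1 + ∑ j, f (b j) := by
    have := Finset.single_le_sum (f := fun j => f (b j)) (fun j _ => hf.nonneg _)
      (Finset.mem_univ i)
    linarith
  calc ‖b.equivFun x i‖ * f (b i) ≤ ‖b.equivFun x‖ * (1 + ∑ j, f (b j)) := by
        apply mul_le_mul h1 h2 (hf.nonneg _) (norm_nonneg _)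
    _ = (1 + ∑ j, f (b j)) * ‖b.equivFun x‖ := mul_comm _ _


lemma exists_lower [LocallyCompactSpace K] [FiniteDimensional K V] (hf : IsVecNorm K V f) :
    ∃ c : ℝ, 0 < c ∧ ∀ x, c * ‖(Module.finBasis K V).equivFun x‖ ≤ f x := by
  set b := Module.finBasis K V with hb
  by_cases hn : Module.finrank K V = 0
  · refine ⟨1, one_pos, fun x => ?_⟩
    haveI : IsEmpty (Fin (Module.finrank K V)) := by rw [hn]; infer_instance
    have h0 : b.equivFun x = 0 := funext fun i => (IsEmpty.false i).elim
    rw [h0, norm_zero, mul_zero]; exact hf.nonneg x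
  · haveI : ProperSpace K := ProperSpace.of_locallyCompactSpace K
    obtain ⟨C, hC, hCb⟩ := hf.exists_upper
    set g : (Fin (Module.finrank K V) → K) → ℝ := fun y => f (b.equivFun.symm y) with hg
    have hlip : ∀ y z, dist (g y) (g z) ≤ C * dist y z := fun y z => by
      rw [Real.dist_eq, dist_eq_norm]
      calc |g y - g z| ≤ f (b.equivFun.symm y - b.equivFun.symm z) := hf.abs_sub_le _ _
        _ = f (b.equivFun.symm (y - z)) := by rw [map_sub]
        _ ≤ C * ‖b.equivFun (b.equivFun.symm (y - z))‖ := hCb _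
        _ = C * ‖y - z‖ := by rw [b.equivFun.apply_symm_apply]
    have hcont : Continuous g := (LipschitzWith.of_dist_le_mul (K := C.toNNReal) (by
        intro y z; rw [Real.coe_toNNReal _ hC.le]; exact hlip y z)).continuous
    haveI : Nonempty (Fin (Module.finrank K V)) := ⟨⟨0, Nat.pos_of_ne_zero hn⟩⟩
    have hne : (Metric.sphere (0 : Fin (Module.finrank K V) → K) 1).Nonempty := by
      refine ⟨fun _ => 1, ?_⟩
      simp [Metric.mem_sphere, dist_zero_right, pi_norm_const]
    obtain ⟨y₀, hy₀S, hmin⟩ :=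
      (isCompact_sphere (0 : Fin (Module.finrank K V) → K) 1).exists_isMinOn hne
        hcont.continuousOn
    have hy₀ne : b.equivFun.symm y₀ ≠ 0 := by
      intro h
      have hy0 : y₀ = 0 := by
        rw [← b.equivFun.apply_symm_apply y₀, h, map_zero]
      rw [hy0] at hy₀S
      simp at hy₀S
    have hc : 0 < g y₀ := hf.pos hy₀ne
    refine ⟨g y₀, hc, fun x => ?_⟩
    by_cases hx : x = 0
    · subst hx; simp [hf.zero]
    · set y := b.equivFun x with hy
      have hyne : y ≠ 0 := by
        intro h
        apply hx
        rw [← b.equivFun.symm_apply_apply x, ← hy, h, map_zero]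
      obtain ⟨j, -, hj⟩ := Finset.exists_mem_eq_sup Finset.univ Finset.univ_nonempty
        (fun i => ‖y i‖₊)
      have hnorm : ‖y‖₊ = ‖y j‖₊ := by rw [Pi.nnnorm_def]; exact hj
      set a := y j with hadef
      have ha : ‖a‖ = ‖y‖ := by
        rw [← coe_nnnorm, ← coe_nnnorm, hnorm]
      have hane : a ≠ 0 := by
        intro h
        apply hyne
        rw [← norm_eq_zero (a := y)] at *
        rw [← ha, h, norm_zero]
      have hynorm : ‖y‖ ≠ 0 := fun h => hyne (norm_eq_zero.1 h)
      have hz : ‖a⁻¹ • y‖ = 1 := by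
        rw [norm_smul, norm_inv, ha, inv_mul_cancel₀ hynorm]
      have hzS : a⁻¹ • y ∈ Metric.sphere (0 : Fin (Module.finrank K V) → K) 1 := by
        simpa [Metric.mem_sphere, dist_zero_right] using hz
      have hmin' : g y₀ ≤ g (a⁻¹ • y) := hmin hzS
      have hxa : x = a • b.equivFun.symm (a⁻¹ • y) := by
        rw [← map_smul, smul_smul, mul_inv_cancel₀ hane, one_smul, hy,
          b.equivFun.symm_apply_apply]
      have : f x = ‖a‖ * g (a⁻¹ • y) := by rw [hxa, hf.smul_eq]
      rw [this, ha]
      calc g y₀ * ‖y‖ ≤ g (a⁻¹ • y) * ‖y‖ :=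
            mul_le_mul_of_nonneg_right hmin' (norm_nonneg _)
        _ = ‖y‖ * g (a⁻¹ • y) := mul_comm _ _

lemma exists_le [LocallyCompactSpace K] [FiniteDimensional K V] (hf : IsVecNorm K V f)
    (hf' : IsVecNorm K V f') : ∃ C : ℝ, 1 ≤ C ∧ ∀ x, f' x ≤ C * f x := by
  obtain ⟨C, hC, hCb⟩ := hf'.exists_upper
  obtain ⟨c, hc, hcb⟩ := hf.exists_lower
  refine ⟨max 1 (C / c), le_max_left _ _, fun x => ?_⟩
  have h1 : f' x ≤ (C / c) * f x := by
    calc f' x ≤ C * ‖(Module.finBasis K V).equivFun x‖ := hCb x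
      _ = (C / c) * (c * ‖(Module.finBasis K V).equivFun x‖) := by field_simp
      _ ≤ (C / c) * f x := by
          apply mul_le_mul_of_nonneg_left (hcb x) (by positivity)
  calc f' x ≤ (C / c) * f x := h1
    _ ≤ max 1 (C / c) * f x := mul_le_mul_of_nonneg_right (le_max_right _ _)
        ((hf.nonneg x))

lemma exists_le_both [LocallyCompactSpace K] [FiniteDimensional K V] (hf : IsVecNorm K V f)
    (hf' : IsVecNorm K V f') :
    ∃ C : ℝ, 1 ≤ C ∧ (∀ x, f' x ≤ C * f x) ∧ (∀ x, f x ≤ C * f' x) := by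
  obtain ⟨C₁, hC₁, h₁⟩ := hf.exists_le hf'
  obtain ⟨C₂, hC₂, h₂⟩ := hf'.exists_le hf
  refine ⟨max C₁ C₂, le_trans hC₁ (le_max_left _ _), fun x => ?_, fun x => ?_⟩
  · exact (h₁ x).trans (mul_le_mul_of_nonneg_right (le_max_left _ _) (hf.nonneg x))
  · exact (h₂ x).trans (mul_le_mul_of_nonneg_right (le_max_right _ _) (hf'.nonneg x))

lemma restrict (hf : IsVecNorm K V f) (W : Submodule K V) :
    IsVecNorm K ↥W (fun w => f (w : V)) := by
  refine ⟨fun w => hf.nonneg _, fun w => ?_, fun a w => ?_, fun w₁ w₂ => ?_⟩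
  · rw [hf.eq_zero_iff]
    exact ⟨fun h => Subtype.ext h, fun h => by rw [h]; rfl⟩
  · rw [Submodule.coe_smul, hf.smul_eq]
  · exact hf.add_le_max _ _

end IsVecNorm
section helpers

lemma div_le_max_div {A B A' B' : ℝ} (hA : 0 < A) (hB : 0 < B) (h : A' / A ≤ B' / B) :
    A' / A ≤ max A' B' / max A B := by
  rcases le_total A B with hAB | hAB
  · rw [max_eq_right hAB]
    refine h.trans ?_
    gcongr
    exact le_max_right _ _
  · rw [max_eq_left hAB]
    gcongr
    exact le_max_left _ _

lemma IsVecNorm.log_min_le {K : Type*} [NontriviallyNormedField K] {V : Type*} [AddCommGroup V]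
    [Module K V] {f f' : V → ℝ} (hf : IsVecNorm K V f) (hf' : IsVecNorm K V f')
    {x₁ x₂ : V} (h1 : x₁ ≠ 0) (h2 : x₂ ≠ 0)
    (hm : f (x₁ + x₂) = max (f x₁) (f x₂)) (hm' : f' (x₁ + x₂) = max (f' x₁) (f' x₂)) :
    min (Real.log (f' x₁ / f x₁)) (Real.log (f' x₂ / f x₂)) ≤
      Real.log (f' (x₁ + x₂) / f (x₁ + x₂)) := by
  rw [hm, hm']
  rcases le_total (f' x₁ / f x₁) (f' x₂ / f x₂) with h | h
  · refine (min_le_left _ _).trans ?_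
    exact Real.log_le_log (div_pos (hf'.pos h1) (hf.pos h1))
      (div_le_max_div (hf.pos h1) (hf.pos h2) h)
  · refine (min_le_right _ _).trans ?_
    rw [max_comm (f' x₁) (f' x₂), max_comm (f x₁) (f x₂)]
    exact Real.log_le_log (div_pos (hf'.pos h2) (hf.pos h2))
      (div_le_max_div (hf.pos h2) (hf.pos h1) h)

lemma Submodule.exists_ne_zero_of_one_le_finrank {K : Type*} [NormedField K] {V : Type*}
    [AddCommGroup V] [Module K V] {U : Submodule K V} (h : 1 ≤ Module.finrank K U) :
    ∃ x : V, x ∈ U ∧ x ≠ 0 := by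
  apply Submodule.exists_mem_ne_zero_of_ne_bot
  intro hbot
  rw [hbot] at h
  simp [finrank_bot] at h

end helpers

/-- Let `K` be a non-archimedean local field and `V` a `K`-vector space of
dimension `N ≥ 1` with two norms `f`, `f'`. If `V = Kv ⊕ W` is a decomposition orthogonal
for both norms and `λ_1(f, f') = log (f' v / f v)`, then for `1 ≤ i ≤ N - 1`:
`λ_i(f|_W, f'|_W) = λ_{i+1}(f, f')`. -/
theorem relativeSpectrum_restrict_of_orthogonal_decomp
    (K : Type*) [NontriviallyNormedField K] [IsUltrametricDist K] [LocallyCompactSpace K]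
    (V : Type*) [AddCommGroup V] [Module K V] [FiniteDimensional K V]
    (N : ℕ) (hN : 1 ≤ N) (hdim : Module.finrank K V = N)
    (f f' : V → ℝ) (hf : IsVecNorm K V f) (hf' : IsVecNorm K V f')
    (v : V) (hv : v ≠ 0) (W : Submodule K V)
    (horth : IsOrthogonalDecomp K f (Submodule.span K {v}) W)
    (horth' : IsOrthogonalDecomp K f' (Submodule.span K {v}) W)
    (hlambda : relativeSpectrum K V f f' 1 = Real.log (f' v / f v)) :
    ∀ i : ℕ, 1 ≤ i → i ≤ N - 1 →
      relativeSpectrum K ↥W (fun w => f (w : V)) (fun w => f' (w : V)) i =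
        relativeSpectrum K V f f' (i + 1) := by
  intro i hi1 hiN
  classical
  obtain ⟨C, hC1, hCf, hCf'⟩ := hf.exists_le_both hf'
  have hC0 : (0:ℝ) < C := lt_of_lt_of_le one_pos hC1
  have hrub : ∀ x : V, x ≠ 0 → Real.log (f' x / f x) ≤ Real.log C := by
    intro x hx
    apply Real.log_le_log (div_pos (hf'.pos hx) (hf.pos hx))
    rw [div_le_iff₀ (hf.pos hx)]
    exact hCf x
  have hrlb : ∀ x : V, x ≠ 0 → -Real.log C ≤ Real.log (f' x / f x) := by
    intro x hx
    rw [← Real.log_inv]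
    apply Real.log_le_log (by positivity)
    rw [le_div_iff₀ (hf.pos hx), inv_mul_le_iff₀ hC0]
    exact hCf' x
  have hrsmul : ∀ (a : K) (x : V), a ≠ 0 →
      Real.log (f' (a • x) / f (a • x)) = Real.log (f' x / f x) := by
    intro a x ha
    rw [hf.smul_eq, hf'.smul_eq, mul_div_mul_left _ _ (norm_ne_zero_iff.2 ha)]
  have hbdd : ∀ U : Submodule K V,
      BddBelow (Set.range fun w : {w : V // w ∈ U ∧ w ≠ 0} => Real.log (f' w.1 / f w.1)) := by
    intro U
    exact ⟨-Real.log C, by rintro y ⟨⟨w, hwU, hw0⟩, rfl⟩; exact hrlb w hw0⟩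
  have hbddW : ∀ U' : Submodule K ↥W,
      BddBelow (Set.range fun w : {w : ↥W // w ∈ U' ∧ w ≠ 0} =>
        Real.log (f' (w.1 : V) / f (w.1 : V))) := by
    intro U'
    refine ⟨-Real.log C, ?_⟩
    rintro y ⟨⟨w, hwU, hw0⟩, rfl⟩
    exact hrlb (w : V) (by simpa using hw0)
  have hIle : ∀ (U : Submodule K V) (x : V), x ∈ U → x ≠ 0 →
      (⨅ w : {w : V // w ∈ U ∧ w ≠ 0}, Real.log (f' w.1 / f w.1)) ≤ Real.log (f' x / f x) :=
    fun U x hxU hx0 => ciInf_le (hbdd U) ⟨x, hxU, hx0⟩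
  have hIleW : ∀ (U' : Submodule K ↥W) (x : ↥W), x ∈ U' → x ≠ 0 →
      (⨅ w : {w : ↥W // w ∈ U' ∧ w ≠ 0}, Real.log (f' (w.1 : V) / f (w.1 : V))) ≤
        Real.log (f' (x : V) / f (x : V)) :=
    fun U' x hxU hx0 => ciInf_le (hbddW U') ⟨x, hxU, hx0⟩
  have hlam1 : ∀ x : V, x ≠ 0 → Real.log (f' x / f x) ≤ Real.log (f' v / f v) := by
    intro x hx
    rw [← hlambda]
    have hbddA : BddAbove (Set.range fun Wsub : {W : Submodule K V // 1 ≤ Module.finrank K W} =>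
        ⨅ w : {w : V // w ∈ Wsub.1 ∧ w ≠ 0}, Real.log (f' w.1 / f w.1)) := by
      refine ⟨Real.log C, ?_⟩
      rintro y ⟨⟨U, hU⟩, rfl⟩
      obtain ⟨x₀, hx₀U, hx₀⟩ := Submodule.exists_ne_zero_of_one_le_finrank hU
      exact (hIle U x₀ hx₀U hx₀).trans (hrub x₀ hx₀)
    have heq : (⨅ w : {w : V // w ∈ Submodule.span K {x} ∧ w ≠ 0}, Real.log (f' w.1 / f w.1))
        = Real.log (f' x / f x) := by
      haveI : Nonempty {w : V // w ∈ Submodule.span K {x} ∧ w ≠ 0} :=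
        ⟨⟨x, Submodule.mem_span_singleton_self x, hx⟩⟩
      refine le_antisymm (hIle _ x (Submodule.mem_span_singleton_self x) hx) (le_ciInf ?_)
      rintro ⟨w, hw, hw0⟩
      obtain ⟨a, rfl⟩ := Submodule.mem_span_singleton.1 hw
      have ha : a ≠ 0 := by rintro rfl; simp at hw0
      exact (hrsmul a x ha).ge
    rw [← heq]
    exact le_ciSup hbddA ⟨Submodule.span K {x}, by rw [finrank_span_singleton hx]⟩
  have hWrank : 1 + Module.finrank K ↥W = N := by
    have h := Submodule.finrank_add_eq_of_isCompl horth.1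
    rwa [finrank_span_singleton hv, hdim] at h
  unfold relativeSpectrum
  apply csSup_eq_csSup_of_forall_exists_le
  · -- from W-subspaces to V-subspaces
    rintro x ⟨⟨U', hU'⟩, rfl⟩
    obtain ⟨x₀, hx₀U, hx₀⟩ := Submodule.exists_ne_zero_of_one_le_finrank (le_trans hi1 hU')
    have hx₀V : (x₀ : V) ≠ 0 := by simpa using hx₀
    have hdisj : Disjoint (Submodule.map W.subtype U') (Submodule.span K {v}) :=
      (horth.1.disjoint.symm).mono_left (Submodule.map_subtype_le W U')
    have hrank : i + 1 ≤
        Module.finrank K ↥(Submodule.map W.subtype U' ⊔ Submodule.span K {v}) := by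
      have h1 := Submodule.finrank_sup_add_finrank_inf_eq (Submodule.map W.subtype U')
        (Submodule.span K {v})
      rw [hdisj.eq_bot, finrank_bot, finrank_span_singleton hv,
        Submodule.finrank_map_subtype_eq] at h1
      omega
    refine ⟨_, ⟨⟨Submodule.map W.subtype U' ⊔ Submodule.span K {v}, hrank⟩, rfl⟩, ?_⟩
    haveI : Nonempty {u : V //
        u ∈ Submodule.map W.subtype U' ⊔ Submodule.span K {v} ∧ u ≠ 0} :=
      ⟨⟨(x₀ : V), Submodule.mem_sup_left (Submodule.mem_map_of_mem hx₀U), hx₀V⟩⟩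
    apply le_ciInf
    rintro ⟨u, huU, hu0⟩
    show (⨅ w : {w : ↥W // w ∈ U' ∧ w ≠ 0}, Real.log (f' (w.1 : V) / f (w.1 : V))) ≤
      Real.log (f' u / f u)
    obtain ⟨x, hx, s, hs, hu⟩ := Submodule.mem_sup.1 huU
    obtain ⟨a, rfl⟩ := Submodule.mem_span_singleton.1 hs
    subst hu
    have hxW : x ∈ W := Submodule.map_subtype_le W U' hx
    by_cases ha : a = 0
    · subst ha
      rw [zero_smul, add_zero] at hu0 ⊢
      obtain ⟨w, hwU', rfl⟩ := Submodule.mem_map.1 hx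
      exact hIleW U' w hwU' (by simpa using hu0)
    · have hav : a • v ≠ 0 := smul_ne_zero ha hv
      by_cases hx0 : x = 0
      · rw [hx0, zero_add]
        calc (⨅ w : {w : ↥W // w ∈ U' ∧ w ≠ 0}, Real.log (f' (w.1 : V) / f (w.1 : V)))
            ≤ Real.log (f' (x₀ : V) / f (x₀ : V)) := hIleW U' x₀ hx₀U hx₀
          _ ≤ Real.log (f' v / f v) := hlam1 _ hx₀V
          _ = Real.log (f' (a • v) / f (a • v)) := (hrsmul a v ha).symm
      · have hmax : f (x + a • v) = max (f x) (f (a • v)) := by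
          rw [add_comm x (a • v),
            horth.2 (a • v) (Submodule.smul_mem _ a (Submodule.mem_span_singleton_self v)) x hxW,
            max_comm]
        have hmax' : f' (x + a • v) = max (f' x) (f' (a • v)) := by
          rw [add_comm x (a • v),
            horth'.2 (a • v) (Submodule.smul_mem _ a (Submodule.mem_span_singleton_self v)) x hxW,
            max_comm]
        refine le_trans (le_min ?_ ?_) (hf.log_min_le hf' hx0 hav hmax hmax')
        · obtain ⟨w, hwU', rfl⟩ := Submodule.mem_map.1 hx
          exact hIleW U' w hwU' (by simpa using hx0)
        · calc (⨅ w : {w : ↥W // w ∈ U' ∧ w ≠ 0}, Real.log (f' (w.1 : V) / f (w.1 : V)))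
              ≤ Real.log (f' (x₀ : V) / f (x₀ : V)) := hIleW U' x₀ hx₀U hx₀
            _ ≤ Real.log (f' v / f v) := hlam1 _ hx₀V
            _ = Real.log (f' (a • v) / f (a • v)) := (hrsmul a v ha).symm
  · -- from V-subspaces to W-subspaces
    rintro y ⟨⟨U, hU⟩, rfl⟩
    have hUrank : i ≤ Module.finrank K ↥(Submodule.comap W.subtype U) := by
      have h1 := Submodule.finrank_sup_add_finrank_inf_eq W U
      have h2 : Module.finrank K ↥(W ⊓ U) =
          Module.finrank K ↥(Submodule.comap W.subtype U) := by
        rw [← Submodule.map_comap_subtype]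
        exact Submodule.finrank_map_subtype_eq W _
      have h3 : Module.finrank K ↥(W ⊔ U) ≤ N := by
        rw [← hdim]; exact Submodule.finrank_le _
      omega
    refine ⟨_, ⟨⟨Submodule.comap W.subtype U, hUrank⟩, rfl⟩, ?_⟩
    haveI : Nonempty {w : ↥W // w ∈ Submodule.comap W.subtype U ∧ w ≠ 0} := by
      obtain ⟨w₀, hw₀, hw₀0⟩ := Submodule.exists_ne_zero_of_one_le_finrank
        (le_trans hi1 hUrank)
      exact ⟨⟨w₀, hw₀, hw₀0⟩⟩
    apply le_ciInf
    rintro ⟨w, hwU, hw0⟩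
    exact hIle U (w : V) hwU (by simpa using hw0)
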